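/- arXiv:1909.13771 — 3 statements merged into one kernel-verified Lean document; each statement's English description precedes it below -/
import Mathlib

section
/- For all p ∈ [0,1], the maximal 1-independent connectivity function of the 4-cycle satisfies F_{1,C₄}(p) = 2p − p² for p ∈ [2/3, 1], and F_{1,C₄}(p) = 2p² for p ∈ [0, 2/3]. -/
open MeasureTheory ProbabilityTheory

namespace OneIndep

variable {V : Type*}

/-- The configuration space of a bond percolation model on `G`: each edge of `G` is
either open (`true`) or closed (`false`). A configuration is identified with the
spanning subgraph consisting of its open edges. -/
abbrev Config (G : SimpleGraph V) : Type _ := G.edgeSet → Bool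

/-- The set of endpoints of edges belonging to an edge set `F`. -/
def endpointsOf (F : Set (Sym2 V)) : Set V := {v | ∃ e ∈ F, v ∈ e}

/-- Two edge sets are `k`-distant in `G` if they are disjoint and every walk in `G` from an
endpoint of an edge of `F₁` to an endpoint of an edge of `F₂` has length at least `k`.
For `k = 1` this says precisely that `F₁` and `F₂` are disjoint and no edge of `F₁` shares
an endpoint with an edge of `F₂`. -/
def KDistant (G : SimpleGraph V) (k : ℕ) (F₁ F₂ : Set (Sym2 V)) : Prop :=
  Disjoint F₁ F₂ ∧
    ∀ u ∈ endpointsOf F₁, ∀ v ∈ endpointsOf F₂, ∀ w : G.Walk u v, k ≤ w.length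

/-- The sub-σ-algebra of the configuration space generated by the states of the edges
belonging to `F`. -/
def cylinderSigma (G : SimpleGraph V) (F : Set (Sym2 V)) : MeasurableSpace (Config G) :=
  MeasurableSpace.comap (fun ω (e : {e : G.edgeSet // (e : Sym2 V) ∈ F}) => ω e) inferInstance

/-- A measure on the configuration space of `G` is `k`-independent if the states of any two
`k`-distant edge sets are independent. -/
def KIndepMeasure (G : SimpleGraph V) (k : ℕ) (μ : Measure (Config G)) : Prop :=
  ∀ F₁ F₂ : Set (Sym2 V), F₁ ⊆ G.edgeSet → F₂ ⊆ G.edgeSet → KDistant G k F₁ F₂ →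
    Indep (cylinderSigma G F₁) (cylinderSigma G F₂) μ

/-- `MGe G k p` is the collection of `k`-independent bond percolation measures on `G` in which
every edge is open with probability at least `p`. -/
def MGe (G : SimpleGraph V) (k : ℕ) (p : ℝ) : Set (Measure (Config G)) :=
  {μ | IsProbabilityMeasure μ ∧ KIndepMeasure G k μ ∧
    ∀ e : G.edgeSet, ENNReal.ofReal p ≤ μ {ω | ω e = true}}

/-- `MLe G k p` is the collection of `k`-independent bond percolation measures on `G` in which
every edge is open with probability at most `p`. -/
def MLe (G : SimpleGraph V) (k : ℕ) (p : ℝ) : Set (Measure (Config G)) :=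
  {μ | IsProbabilityMeasure μ ∧ KIndepMeasure G k μ ∧
    ∀ e : G.edgeSet, μ {ω | ω e = true} ≤ ENNReal.ofReal p}

/-- The spanning subgraph of `G` consisting of the open edges of the configuration `ω`. -/
def openSubgraph (G : SimpleGraph V) (ω : Config G) : SimpleGraph V :=
  SimpleGraph.fromEdgeSet {e | ∃ h : e ∈ G.edgeSet, ω ⟨e, h⟩ = true}

/-- Percolation: the open subgraph contains an infinite connected component. -/
def Percolates (G : SimpleGraph V) (ω : Config G) : Prop :=
  ∃ v : V, {w | (openSubgraph G ω).Reachable v w}.Infinite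

/-- The Harris critical probability for 1-independent percolation on `G`. -/
noncomputable def harrisCrit (G : SimpleGraph V) : ℝ :=
  sInf {p | p ∈ Set.Icc (0:ℝ) 1 ∧ ∀ μ ∈ MGe G 1 p, μ {ω | Percolates G ω} = 1}

/-- The open subgraph contains a path of length `n`. -/
def HasOpenPathOfLength (G : SimpleGraph V) (ω : Config G) (n : ℕ) : Prop :=
  ∃ (u v : V) (w : (openSubgraph G ω).Walk u v), w.IsPath ∧ w.length = n

/-- The long paths critical probability for 1-independent percolation on `G`. -/
noncomputable def longPathsCrit (G : SimpleGraph V) : ℝ :=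
  sInf {p | p ∈ Set.Icc (0:ℝ) 1 ∧
    ∀ μ ∈ MGe G 1 p, ∀ n : ℕ, 0 < μ {ω | HasOpenPathOfLength G ω n}}

/-- The `k`-independent connectivity function `f_{k,G}(p)`: the infimum over all
`k`-independent measures with edge-probability at least `p` of the probability that the
random spanning subgraph is connected. -/
noncomputable def connFun (G : SimpleGraph V) (k : ℕ) (p : ℝ) : ℝ :=
  sInf {x | ∃ μ ∈ MGe G k p, x = (μ {ω | (openSubgraph G ω).Connected}).toReal}

/-- The maximal `k`-independent connectivity function `F_{k,G}(p)`: the supremum over all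
`k`-independent measures with edge-probability at most `p` of the probability that the
random spanning subgraph is connected. -/
noncomputable def connFunMax (G : SimpleGraph V) (k : ℕ) (p : ℝ) : ℝ :=
  sSup {x | ∃ μ ∈ MLe G k p, x = (μ {ω | (openSubgraph G ω).Connected}).toReal}

/-- The line lattice `ℤ`: the two-way infinite path. -/
def lineLattice : SimpleGraph ℤ := SimpleGraph.fromRel (fun x y => y = x + 1)

/-- The hypercubic lattice `ℤ^d`. -/
def hypercubicLattice (d : ℕ) : SimpleGraph (Fin d → ℤ) :=
  SimpleGraph.fromRel (fun x y => ∑ i, (x i - y i).natAbs = 1)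

/-- The square lattice `ℤ²`. -/
def squareLattice : SimpleGraph (ℤ × ℤ) :=
  SimpleGraph.fromRel (fun x y => (x.1 - y.1).natAbs + (x.2 - y.2).natAbs = 1)


/-! ### Auxiliary material for `connFunMax_cycleGraph_four` -/

section C4Aux

abbrev G4 : SimpleGraph (Fin 4) := SimpleGraph.cycleGraph 4

lemma mem_edgeSet4 : ∀ e : Sym2 (Fin 4), e ∈ G4.edgeSet ↔
    e = s(0,1) ∨ e = s(1,2) ∨ e = s(2,3) ∨ e = s(0,3) := by
  intro e; induction e using Sym2.ind with
  | _ x y => revert x y; decide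

def ea : G4.edgeSet := ⟨s(0,1), by decide⟩
def eb : G4.edgeSet := ⟨s(1,2), by decide⟩
def ec : G4.edgeSet := ⟨s(2,3), by decide⟩
def ed : G4.edgeSet := ⟨s(0,3), by decide⟩

abbrev B4 := Bool × Bool × Bool × Bool

def cfg (t : B4) : Config G4 := fun e =>
  if e.1 = s(0,1) then t.1 else if e.1 = s(1,2) then t.2.1
  else if e.1 = s(2,3) then t.2.2.1 else t.2.2.2

@[simp] lemma cfg_ea (t : B4) : cfg t ea = t.1 := rfl
@[simp] lemma cfg_eb (t : B4) : cfg t eb = t.2.1 := by simp [cfg, eb]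
@[simp] lemma cfg_ec (t : B4) : cfg t ec = t.2.2.1 := by simp [cfg, ec]
@[simp] lemma cfg_ed (t : B4) : cfg t ed = t.2.2.2 := by simp [cfg, ed]

lemma openSubgraph_adj_cases {ω : Config G4} {x y : Fin 4}
    (h : (openSubgraph G4 ω).Adj x y) :
    (s(x,y) = s(0,1) ∧ ω ea = true) ∨ (s(x,y) = s(1,2) ∧ ω eb = true) ∨
    (s(x,y) = s(2,3) ∧ ω ec = true) ∨ (s(x,y) = s(0,3) ∧ ω ed = true) := by
  rw [openSubgraph, SimpleGraph.fromEdgeSet_adj] at h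
  obtain ⟨⟨hmem, hopen⟩, -⟩ := h
  rcases (mem_edgeSet4 _).1 hmem with h | h | h | h
  · exact Or.inl ⟨h, by rwa [show (⟨s(x,y), hmem⟩ : G4.edgeSet) = ea from Subtype.ext h] at hopen⟩
  · exact Or.inr <| Or.inl ⟨h, by rwa [show (⟨s(x,y), hmem⟩ : G4.edgeSet) = eb from Subtype.ext h] at hopen⟩
  · exact Or.inr <| Or.inr <| Or.inl ⟨h, by rwa [show (⟨s(x,y), hmem⟩ : G4.edgeSet) = ec from Subtype.ext h] at hopen⟩
  · exact Or.inr <| Or.inr <| Or.inr ⟨h, by rwa [show (⟨s(x,y), hmem⟩ : G4.edgeSet) = ed from Subtype.ext h] at hopen⟩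

lemma openSubgraph_adj_of {ω : Config G4} {x y : Fin 4} (hxy : G4.Adj x y)
    (h : ∃ hm : s(x,y) ∈ G4.edgeSet, ω ⟨s(x,y), hm⟩ = true) :
    (openSubgraph G4 ω).Adj x y := by
  rw [openSubgraph, SimpleGraph.fromEdgeSet_adj]
  exact ⟨h, hxy.ne⟩

lemma invariant_walk {H : SimpleGraph (Fin 4)} (f : Fin 4 → Bool)
    (h : ∀ x y, H.Adj x y → f x = f y) :
    ∀ u v : Fin 4, (w : H.Walk u v) → f u = f v := by
  intro u v w
  induction w with
  | nil => rfl
  | cons h' _ ih => exact (h _ _ h').trans ih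

lemma not_connected_of_invariant {H : SimpleGraph (Fin 4)} (f : Fin 4 → Bool)
    (h : ∀ x y, H.Adj x y → f x = f y) {u v : Fin 4} (hne : f u ≠ f v) :
    ¬ H.Connected := by
  intro hc
  obtain ⟨w⟩ := hc.preconnected u v
  exact hne (invariant_walk f h u v w)

lemma connected_of_chain {H : SimpleGraph (Fin 4)} {x0 x1 x2 x3 : Fin 4}
    (hsurj : ∀ v : Fin 4, v = x0 ∨ v = x1 ∨ v = x2 ∨ v = x3)
    (h1 : H.Adj x0 x1) (h2 : H.Adj x1 x2) (h3 : H.Adj x2 x3) : H.Connected := by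
  have r : ∀ v, H.Reachable x0 v := by
    intro v
    rcases hsurj v with rfl | rfl | rfl | rfl
    · exact SimpleGraph.Reachable.refl _
    · exact h1.reachable
    · exact h1.reachable.trans h2.reachable
    · exact (h1.reachable.trans h2.reachable).trans h3.reachable
  exact ⟨fun u v => (r u).symm.trans (r v)⟩

lemma notconn_gen (ω : Config G4) (f : Fin 4 → Bool)
    (hfa : ω ea = true → f 0 = f 1) (hfb : ω eb = true → f 1 = f 2)
    (hfc : ω ec = true → f 2 = f 3) (hfd : ω ed = true → f 0 = f 3)
    {u v : Fin 4} (hne : f u ≠ f v) : ¬ (openSubgraph G4 ω).Connected := by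
  apply not_connected_of_invariant f _ hne
  intro x y hadj
  rcases openSubgraph_adj_cases hadj with ⟨h, ho⟩ | ⟨h, ho⟩ | ⟨h, ho⟩ | ⟨h, ho⟩ <;>
    rcases Sym2.eq_iff.1 h with ⟨rfl, rfl⟩ | ⟨rfl, rfl⟩
  exacts [hfa ho, (hfa ho).symm, hfb ho, (hfb ho).symm, hfc ho, (hfc ho).symm,
    hfd ho, (hfd ho).symm]

lemma adj_a {ω : Config G4} (h : ω ea = true) : (openSubgraph G4 ω).Adj 0 1 :=
  openSubgraph_adj_of (by decide) ⟨by decide, h⟩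
lemma adj_b {ω : Config G4} (h : ω eb = true) : (openSubgraph G4 ω).Adj 1 2 :=
  openSubgraph_adj_of (by decide) ⟨by decide, h⟩
lemma adj_c {ω : Config G4} (h : ω ec = true) : (openSubgraph G4 ω).Adj 2 3 :=
  openSubgraph_adj_of (by decide) ⟨by decide, h⟩
lemma adj_d {ω : Config G4} (h : ω ed = true) : (openSubgraph G4 ω).Adj 0 3 :=
  openSubgraph_adj_of (by decide) ⟨by decide, h⟩

lemma connected_iff (ω : Config G4) :
    (openSubgraph G4 ω).Connected ↔
      ((ω eb && ω ec && ω ed) || (ω ea && ω ec && ω ed) ||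
       (ω ea && ω eb && ω ed) || (ω ea && ω eb && ω ec)) = true := by
  constructor
  · intro hc
    have K1 : ∀ (f : Fin 4 → Bool), (ω ea = true → f 0 = f 1) → (ω eb = true → f 1 = f 2) →
        (ω ec = true → f 2 = f 3) → (ω ed = true → f 0 = f 3) →
        ∀ u v : Fin 4, f u ≠ f v → False :=
      fun f h1 h2 h3 h4 u v hne => notconn_gen ω f h1 h2 h3 h4 hne hc
    cases hA : ω ea <;> cases hB : ω eb <;> cases hC : ω ec <;> cases hD : ω ed <;>
      simp only [hA, hB, hC, hD, Bool.and_true, Bool.and_false, Bool.false_and,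
        Bool.true_and, Bool.or_true, Bool.true_or, Bool.or_false, Bool.false_or]
    · exact False.elim (K1 (fun x => decide (x = 1)) (fun h' => by simp [hA] at h')
        (fun h' => by simp [hB] at h') (fun _ => by decide) (fun _ => by decide) 1 0 (by decide))
    · exact False.elim (K1 (fun x => decide (x = 1)) (fun h' => by simp [hA] at h')
        (fun h' => by simp [hB] at h') (fun _ => by decide) (fun _ => by decide) 1 0 (by decide))
    · exact False.elim (K1 (fun x => decide (x = 1)) (fun h' => by simp [hA] at h')
        (fun h' => by simp [hB] at h') (fun _ => by decide) (fun _ => by decide) 1 0 (by decide))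
    · exact False.elim (K1 (fun x => decide (x = 1)) (fun h' => by simp [hA] at h')
        (fun h' => by simp [hB] at h') (fun _ => by decide) (fun _ => by decide) 1 0 (by decide))
    · exact False.elim (K1 (fun x => decide (x = 1 ∨ x = 2)) (fun h' => by simp [hA] at h')
        (fun _ => by decide) (fun h' => by simp [hC] at h') (fun h' => by simp [hD] at h') 1 0 (by decide))
    · exact False.elim (K1 (fun x => decide (x = 1 ∨ x = 2)) (fun h' => by simp [hA] at h')
        (fun _ => by decide) (fun h' => by simp [hC] at h') (fun _ => by decide) 1 0 (by decide))
    · exact False.elim (K1 (fun x => decide (x = 0)) (fun h' => by simp [hA] at h')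
        (fun _ => by decide) (fun _ => by decide) (fun h' => by simp [hD] at h') 0 1 (by decide))
    · exact False.elim (K1 (fun x => decide (x = 2)) (fun _ => by decide)
        (fun h' => by simp [hB] at h') (fun h' => by simp [hC] at h') (fun _ => by decide) 2 0 (by decide))
    · exact False.elim (K1 (fun x => decide (x = 2)) (fun _ => by decide)
        (fun h' => by simp [hB] at h') (fun h' => by simp [hC] at h') (fun _ => by decide) 2 0 (by decide))
    · exact False.elim (K1 (fun x => decide (x = 0 ∨ x = 1)) (fun _ => by decide)
        (fun h' => by simp [hB] at h') (fun _ => by decide) (fun h' => by simp [hD] at h') 0 2 (by decide))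
    · exact False.elim (K1 (fun x => decide (x = 3)) (fun _ => by decide)
        (fun _ => by decide) (fun h' => by simp [hC] at h') (fun h' => by simp [hD] at h') 3 0 (by decide))
  · intro h
    simp only [Bool.or_eq_true, Bool.and_eq_true] at h
    rcases h with ((⟨⟨hB, hC⟩, hD⟩ | ⟨⟨hA, hC⟩, hD⟩) | ⟨⟨hA, hB⟩, hD⟩) | ⟨⟨hA, hB⟩, hC⟩
    · exact connected_of_chain (by decide) (adj_b hB) (adj_c hC) (adj_d hD).symm
    · exact connected_of_chain (by decide) (adj_a hA).symm (adj_d hD) (adj_c hC).symm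
    · exact connected_of_chain (by decide) (adj_b hB).symm (adj_a hA).symm (adj_d hD)
    · exact connected_of_chain (by decide) (adj_a hA) (adj_b hB) (adj_c hC)

/-! σ-algebra lemmas -/

lemma cylinderSigma_empty_le_bot (G : SimpleGraph V) : cylinderSigma G ∅ ≤ ⊥ := by
  intro s hs
  obtain ⟨t, -, rfl⟩ := hs
  rw [MeasurableSpace.measurableSet_bot_iff]
  by_cases h : (fun (e : {e : G.edgeSet // (e : Sym2 V) ∈ (∅ : Set (Sym2 V))}) =>
      (fun _ => true : Config G) e) ∈ t
  · right
    ext ω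
    simp only [Set.mem_preimage, Set.mem_univ, iff_true]
    convert h using 1
    funext e
    exact absurd e.2 (Set.notMem_empty _)
  · left
    ext ω
    simp only [Set.mem_preimage, Set.mem_empty_iff_false, iff_false]
    intro hmem
    apply h
    convert hmem using 1
    funext e
    exact absurd e.2 (Set.notMem_empty _)

lemma cylinderSigma_singleton (G : SimpleGraph V) (x : G.edgeSet) :
    cylinderSigma G {(x : Sym2 V)} =
      MeasurableSpace.generateFrom {{ω : Config G | ω x = true}} := by
  set D := {e : G.edgeSet // (e : Sym2 V) ∈ ({(x : Sym2 V)} : Set (Sym2 V))} with hD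
  have hduniq : ∀ e : D, e = ⟨x, rfl⟩ := by
    rintro ⟨e, he⟩
    exact Subtype.ext (Subtype.ext he)
  have hconst : ∀ ω : Config G, (fun (e : D) => ω e) = (fun _ => ω x) := by
    intro ω
    funext e
    rw [hduniq e]
  apply le_antisymm
  · intro s hs
    obtain ⟨t, -, rfl⟩ := hs
    by_cases hT : (fun _ : D => true) ∈ t <;> by_cases hF : (fun _ : D => false) ∈ t
    · have : (fun ω : Config G => (fun (e : D) => ω e)) ⁻¹' t = Set.univ := by
        ext ω
        simp only [Set.mem_preimage, Set.mem_univ, iff_true, hconst ω]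
        cases h : ω x
        · exact h ▸ hF
        · exact h ▸ hT
      rw [this]; exact @MeasurableSet.univ _ (MeasurableSpace.generateFrom {{ω : Config G | ω x = true}})
    · have : (fun ω : Config G => (fun (e : D) => ω e)) ⁻¹' t = {ω : Config G | ω x = true} := by
        ext ω
        simp only [Set.mem_preimage, Set.mem_setOf_eq, hconst ω]
        cases h : ω x
        · simp only [Bool.false_eq_true, iff_false]; exact h ▸ hF
        · simp only [iff_true]; exact h ▸ hT
      rw [this]
      exact MeasurableSpace.measurableSet_generateFrom rfl
    · have : (fun ω : Config G => (fun (e : D) => ω e)) ⁻¹' t = {ω : Config G | ω x = true}ᶜ := by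
        ext ω
        simp only [Set.mem_preimage, Set.mem_compl_iff, Set.mem_setOf_eq, hconst ω]
        cases h : ω x
        · simp only [Bool.false_eq_true, not_false_iff, iff_true]; exact h ▸ hF
        · simp only [not_true, iff_false]; exact fun hm => (h ▸ hT : ¬ _) hm
      rw [this]
      exact (MeasurableSpace.measurableSet_generateFrom (Set.mem_singleton _)).compl
    · have : (fun ω : Config G => (fun (e : D) => ω e)) ⁻¹' t = ∅ := by
        ext ω
        simp only [Set.mem_preimage, Set.mem_empty_iff_false, iff_false, hconst ω]
        cases h : ω x
        · exact h ▸ hF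
        · exact h ▸ hT
      rw [this]; exact @MeasurableSet.empty _ (MeasurableSpace.generateFrom {{ω : Config G | ω x = true}})
  · rw [MeasurableSpace.generateFrom_le_iff]
    rintro s rfl
    exact ⟨(fun g : D → Bool => g ⟨x, rfl⟩) ⁻¹' {true},
      (measurable_pi_apply _) (measurableSet_singleton true), rfl⟩

/-! KDistant classification -/

lemma edge_pairs : ∀ e f : Sym2 (Fin 4), e ∈ G4.edgeSet → f ∈ G4.edgeSet →
    (∃ v, v ∈ e ∧ v ∈ f) ∨ ((e = s(0,1) ∧ f = s(2,3)) ∨ (e = s(2,3) ∧ f = s(0,1)) ∨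
      (e = s(1,2) ∧ f = s(0,3)) ∨ (e = s(0,3) ∧ f = s(1,2))) := by decide

lemma no_common_endpoint {G : SimpleGraph V} {F₁ F₂ : Set (Sym2 V)}
    (hd : KDistant G 1 F₁ F₂) {v : V} {e₁ e₂ : Sym2 V}
    (h₁ : e₁ ∈ F₁) (h₂ : e₂ ∈ F₂) (hv₁ : v ∈ e₁) (hv₂ : v ∈ e₂) : False := by
  have := hd.2 v ⟨e₁, h₁, hv₁⟩ v ⟨e₂, h₂, hv₂⟩ SimpleGraph.Walk.nil
  simp at this

lemma opposite_pair : ∀ e f : Sym2 (Fin 4),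
    ((e = s(0,1) ∧ f = s(2,3)) ∨ (e = s(2,3) ∧ f = s(0,1)) ∨
     (e = s(1,2) ∧ f = s(0,3)) ∨ (e = s(0,3) ∧ f = s(1,2))) →
    ∀ g : Sym2 (Fin 4), g ∈ G4.edgeSet → g ≠ e → (∃ v, v ∈ g ∧ v ∈ f) := by decide

lemma kdistant_cases {F₁ F₂ : Set (Sym2 (Fin 4))}
    (h₁ : F₁ ⊆ G4.edgeSet) (h₂ : F₂ ⊆ G4.edgeSet) (hd : KDistant G4 1 F₁ F₂)
    (hn₁ : F₁.Nonempty) (hn₂ : F₂.Nonempty) :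
    (F₁ = {s(0,1)} ∧ F₂ = {s(2,3)}) ∨ (F₁ = {s(2,3)} ∧ F₂ = {s(0,1)}) ∨
    (F₁ = {s(1,2)} ∧ F₂ = {s(0,3)}) ∨ (F₁ = {s(0,3)} ∧ F₂ = {s(1,2)}) := by
  obtain ⟨e₁, he₁⟩ := hn₁
  obtain ⟨e₂, he₂⟩ := hn₂
  have hopp : (e₁ = s(0,1) ∧ e₂ = s(2,3)) ∨ (e₁ = s(2,3) ∧ e₂ = s(0,1)) ∨
      (e₁ = s(1,2) ∧ e₂ = s(0,3)) ∨ (e₁ = s(0,3) ∧ e₂ = s(1,2)) := by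
    rcases edge_pairs e₁ e₂ (h₁ he₁) (h₂ he₂) with ⟨v, hv₁, hv₂⟩ | h
    · exact absurd (no_common_endpoint hd he₁ he₂ hv₁ hv₂) not_false
    · exact h
  have hF₁ : F₁ = {e₁} := by
    apply Set.eq_singleton_iff_unique_mem.2 ⟨he₁, ?_⟩
    intro g hg
    by_contra hne
    obtain ⟨v, hv₁, hv₂⟩ := opposite_pair e₁ e₂ hopp g (h₁ hg) hne
    exact no_common_endpoint hd hg he₂ hv₁ hv₂
  have hopp' : (e₂ = s(0,1) ∧ e₁ = s(2,3)) ∨ (e₂ = s(2,3) ∧ e₁ = s(0,1)) ∨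
      (e₂ = s(1,2) ∧ e₁ = s(0,3)) ∨ (e₂ = s(0,3) ∧ e₁ = s(1,2)) := by tauto
  have hF₂ : F₂ = {e₂} := by
    apply Set.eq_singleton_iff_unique_mem.2 ⟨he₂, ?_⟩
    intro g hg
    by_contra hne
    obtain ⟨v, hv₁, hv₂⟩ := opposite_pair e₂ e₁ hopp' g (h₂ hg) hne
    exact no_common_endpoint hd he₁ hg hv₂ hv₁
  subst hF₁ hF₂
  rcases hopp with ⟨rfl, rfl⟩ | ⟨rfl, rfl⟩ | ⟨rfl, rfl⟩ | ⟨rfl, rfl⟩ <;> tauto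

lemma kdistant_ac : KDistant G4 1 {s(0,1)} {s(2,3)} := by
  constructor
  · simp [Set.disjoint_singleton]
  · rintro u ⟨e, he, hu⟩ v ⟨f, hf, hv⟩ w
    rw [Set.mem_singleton_iff] at he hf
    subst he hf
    have huv : u ≠ v := by
      rw [Sym2.mem_iff] at hu hv
      rcases hu with rfl | rfl <;> rcases hv with rfl | rfl <;> decide
    rw [Nat.one_le_iff_ne_zero]
    intro h0
    exact huv (SimpleGraph.Walk.eq_of_length_eq_zero h0)

lemma kdistant_bd : KDistant G4 1 {s(1,2)} {s(0,3)} := by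
  constructor
  · simp [Set.disjoint_singleton]
  · rintro u ⟨e, he, hu⟩ v ⟨f, hf, hv⟩ w
    rw [Set.mem_singleton_iff] at he hf
    subst he hf
    have huv : u ≠ v := by
      rw [Sym2.mem_iff] at hu hv
      rcases hu with rfl | rfl <;> rcases hv with rfl | rfl <;> decide
    rw [Nat.one_le_iff_ne_zero]
    intro h0
    exact huv (SimpleGraph.Walk.eq_of_length_eq_zero h0)

/-! Measures from weights -/

noncomputable def mk4 (w : B4 → ℝ) : Measure (Config G4) :=
  ∑ t : B4, ENNReal.ofReal (w t) • Measure.dirac (cfg t)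

open Classical in
lemma mk4_apply (w : B4 → ℝ) (hw : ∀ t, 0 ≤ w t) (s : Set (Config G4)) :
    mk4 w s = ENNReal.ofReal (∑ t : B4, if cfg t ∈ s then w t else 0) := by
  rw [mk4]
  rw [Measure.finset_sum_apply]
  rw [ENNReal.ofReal_sum_of_nonneg (fun t _ => by by_cases h : cfg t ∈ s <;> simp [h, hw t])]
  congr 1
  ext t
  rw [Measure.smul_apply, Measure.dirac_apply, smul_eq_mul]
  by_cases h : cfg t ∈ s
  · simp [h, Set.indicator_of_mem]
  · simp [h, Set.indicator_of_notMem]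

def Ea : Set (Config G4) := {ω | ω ea = true}
def Eb : Set (Config G4) := {ω | ω eb = true}
def Ec : Set (Config G4) := {ω | ω ec = true}
def Ed : Set (Config G4) := {ω | ω ed = true}
def EconnB : Set (Config G4) :=
  {ω | ((ω eb && ω ec && ω ed) || (ω ea && ω ec && ω ed) ||
        (ω ea && ω eb && ω ed) || (ω ea && ω eb && ω ec)) = true}

lemma Econn_eq : {ω : Config G4 | (openSubgraph G4 ω).Connected} = EconnB :=
  Set.ext fun ω => connected_iff ω

/-! Independence glue -/

lemma indep_single (μ : Measure (Config G4)) [IsProbabilityMeasure μ] (x y : G4.edgeSet)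
    (h : μ ({ω | ω x = true} ∩ {ω | ω y = true}) =
      μ {ω | ω x = true} * μ {ω | ω y = true}) :
    Indep (cylinderSigma G4 {(x : Sym2 (Fin 4))}) (cylinderSigma G4 {(y : Sym2 (Fin 4))}) μ := by
  rw [cylinderSigma_singleton, cylinderSigma_singleton, ← IndepSet_iff_Indep]
  exact (indepSet_iff_measure_inter_eq_mul MeasurableSet.of_discrete
    MeasurableSet.of_discrete μ).2 h

lemma kindep_of (μ : Measure (Config G4)) [IsProbabilityMeasure μ]
    (hac : Indep (cylinderSigma G4 {s(0,1)}) (cylinderSigma G4 {s(2,3)}) μ)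
    (hbd : Indep (cylinderSigma G4 {s(1,2)}) (cylinderSigma G4 {s(0,3)}) μ) :
    KIndepMeasure G4 1 μ := by
  intro F₁ F₂ h₁ h₂ hd
  rcases Set.eq_empty_or_nonempty F₁ with rfl | hn₁
  · exact indep_of_indep_of_le_left (indep_bot_left _) (cylinderSigma_empty_le_bot G4)
  rcases Set.eq_empty_or_nonempty F₂ with rfl | hn₂
  · exact indep_of_indep_of_le_right (indep_bot_right _) (cylinderSigma_empty_le_bot G4)
  rcases kdistant_cases h₁ h₂ hd hn₁ hn₂ with ⟨rfl, rfl⟩ | ⟨rfl, rfl⟩ | ⟨rfl, rfl⟩ | ⟨rfl, rfl⟩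
  exacts [hac, hac.symm, hbd, hbd.symm]

end C4Aux

section C4Measures

/-! The two optimal measures and measure computations -/

noncomputable def wHigh (p : ℝ) : B4 → ℝ := fun t =>
  match t with
  | (false,false,false,false) => (1-p)^2
  | (true,true,false,true) => p*(1-p)
  | (false,true,true,true) => p*(1-p)
  | (true,true,true,true) => 3*p^2-2*p
  | (true,true,true,false) => p*(1-p)
  | (true,false,true,true) => p*(1-p)
  | _ => 0

noncomputable def wLow (p : ℝ) : B4 → ℝ := fun t =>
  match t with
  | (true,true,true,false) => p^2/2
  | (true,false,true,true) => p^2/2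
  | (true,true,false,true) => p^2/2
  | (false,true,true,true) => p^2/2
  | (true,false,false,false) => p*(1-p) - p^2/2
  | (false,false,true,false) => p*(1-p) - p^2/2
  | (false,true,false,false) => p - 3*p^2/2
  | (false,false,false,true) => p - 3*p^2/2
  | (false,false,false,false) => (1-2*p)^2
  | _ => 0

variable {p : ℝ}

lemma wHigh_nonneg (h23 : 2/3 ≤ p) (h1 : p ≤ 1) : ∀ t, 0 ≤ wHigh p t := by
  rintro ⟨a, b, c, d⟩
  cases a <;> cases b <;> cases c <;> cases d <;> simp [wHigh] <;> nlinarith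

lemma wLow_nonneg (h0 : 0 ≤ p) (h23 : p ≤ 2/3) : ∀ t, 0 ≤ wLow p t := by
  rintro ⟨a, b, c, d⟩
  cases a <;> cases b <;> cases c <;> cases d <;> simp [wLow] <;> nlinarith

lemma wHigh_univ (h23 : 2/3 ≤ p) (h1 : p ≤ 1) : mk4 (wHigh p) Set.univ = 1 := by
  rw [mk4_apply _ (wHigh_nonneg h23 h1), ← ENNReal.ofReal_one]
  congr 1
  simp [Fintype.sum_prod_type, Fintype.sum_bool, wHigh]
  ring

lemma wHigh_Ea (h23 : 2/3 ≤ p) (h1 : p ≤ 1) : mk4 (wHigh p) Ea = ENNReal.ofReal p := by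
  rw [mk4_apply _ (wHigh_nonneg h23 h1)]
  congr 1
  simp [Ea, Fintype.sum_prod_type, Fintype.sum_bool, wHigh]
  ring

lemma wHigh_Eb (h23 : 2/3 ≤ p) (h1 : p ≤ 1) : mk4 (wHigh p) Eb = ENNReal.ofReal p := by
  rw [mk4_apply _ (wHigh_nonneg h23 h1)]
  congr 1
  simp [Eb, Fintype.sum_prod_type, Fintype.sum_bool, wHigh]
  ring

lemma wHigh_Ec (h23 : 2/3 ≤ p) (h1 : p ≤ 1) : mk4 (wHigh p) Ec = ENNReal.ofReal p := by
  rw [mk4_apply _ (wHigh_nonneg h23 h1)]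
  congr 1
  simp [Ec, Fintype.sum_prod_type, Fintype.sum_bool, wHigh]
  ring

lemma wHigh_Ed (h23 : 2/3 ≤ p) (h1 : p ≤ 1) : mk4 (wHigh p) Ed = ENNReal.ofReal p := by
  rw [mk4_apply _ (wHigh_nonneg h23 h1)]
  congr 1
  simp [Ed, Fintype.sum_prod_type, Fintype.sum_bool, wHigh]
  ring

lemma wHigh_ac (h23 : 2/3 ≤ p) (h1 : p ≤ 1) :
    mk4 (wHigh p) (Ea ∩ Ec) = ENNReal.ofReal (p*p) := by
  rw [mk4_apply _ (wHigh_nonneg h23 h1)]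
  congr 1
  simp [Ea, Ec, Set.mem_inter_iff, Fintype.sum_prod_type, Fintype.sum_bool, wHigh]
  ring

lemma wHigh_bd (h23 : 2/3 ≤ p) (h1 : p ≤ 1) :
    mk4 (wHigh p) (Eb ∩ Ed) = ENNReal.ofReal (p*p) := by
  rw [mk4_apply _ (wHigh_nonneg h23 h1)]
  congr 1
  simp [Eb, Ed, Set.mem_inter_iff, Fintype.sum_prod_type, Fintype.sum_bool, wHigh]
  ring

lemma wHigh_conn (h23 : 2/3 ≤ p) (h1 : p ≤ 1) :
    mk4 (wHigh p) EconnB = ENNReal.ofReal (2*p - p^2) := by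
  rw [mk4_apply _ (wHigh_nonneg h23 h1)]
  congr 1
  simp [EconnB, Fintype.sum_prod_type, Fintype.sum_bool, wHigh]
  ring

lemma wLow_univ (h0 : 0 ≤ p) (h23 : p ≤ 2/3) : mk4 (wLow p) Set.univ = 1 := by
  rw [mk4_apply _ (wLow_nonneg h0 h23), ← ENNReal.ofReal_one]
  congr 1
  simp [Fintype.sum_prod_type, Fintype.sum_bool, wLow]
  ring

lemma wLow_Ea (h0 : 0 ≤ p) (h23 : p ≤ 2/3) : mk4 (wLow p) Ea = ENNReal.ofReal p := by
  rw [mk4_apply _ (wLow_nonneg h0 h23)]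
  congr 1
  simp [Ea, Fintype.sum_prod_type, Fintype.sum_bool, wLow]
  ring

lemma wLow_Eb (h0 : 0 ≤ p) (h23 : p ≤ 2/3) : mk4 (wLow p) Eb = ENNReal.ofReal p := by
  rw [mk4_apply _ (wLow_nonneg h0 h23)]
  congr 1
  simp [Eb, Fintype.sum_prod_type, Fintype.sum_bool, wLow]
  ring

lemma wLow_Ec (h0 : 0 ≤ p) (h23 : p ≤ 2/3) : mk4 (wLow p) Ec = ENNReal.ofReal p := by
  rw [mk4_apply _ (wLow_nonneg h0 h23)]
  congr 1
  simp [Ec, Fintype.sum_prod_type, Fintype.sum_bool, wLow]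
  ring

lemma wLow_Ed (h0 : 0 ≤ p) (h23 : p ≤ 2/3) : mk4 (wLow p) Ed = ENNReal.ofReal p := by
  rw [mk4_apply _ (wLow_nonneg h0 h23)]
  congr 1
  simp [Ed, Fintype.sum_prod_type, Fintype.sum_bool, wLow]
  ring

lemma wLow_ac (h0 : 0 ≤ p) (h23 : p ≤ 2/3) :
    mk4 (wLow p) (Ea ∩ Ec) = ENNReal.ofReal (p*p) := by
  rw [mk4_apply _ (wLow_nonneg h0 h23)]
  congr 1
  simp [Ea, Ec, Set.mem_inter_iff, Fintype.sum_prod_type, Fintype.sum_bool, wLow]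
  ring

lemma wLow_bd (h0 : 0 ≤ p) (h23 : p ≤ 2/3) :
    mk4 (wLow p) (Eb ∩ Ed) = ENNReal.ofReal (p*p) := by
  rw [mk4_apply _ (wLow_nonneg h0 h23)]
  congr 1
  simp [Eb, Ed, Set.mem_inter_iff, Fintype.sum_prod_type, Fintype.sum_bool, wLow]
  ring

lemma wLow_conn (h0 : 0 ≤ p) (h23 : p ≤ 2/3) :
    mk4 (wLow p) EconnB = ENNReal.ofReal (2*p^2) := by
  rw [mk4_apply _ (wLow_nonneg h0 h23)]
  congr 1
  simp [EconnB, Fintype.sum_prod_type, Fintype.sum_bool, wLow]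
  ring

/-! Membership in `MLe` -/

lemma high_mem (h0 : 0 ≤ p) (h23 : 2/3 ≤ p) (h1 : p ≤ 1) :
    mk4 (wHigh p) ∈ MLe G4 1 p := by
  have hprob : IsProbabilityMeasure (mk4 (wHigh p)) := ⟨wHigh_univ h23 h1⟩
  refine ⟨hprob, ?_, ?_⟩
  · have hac : mk4 (wHigh p) (Ea ∩ Ec) = mk4 (wHigh p) Ea * mk4 (wHigh p) Ec := by
      rw [wHigh_ac h23 h1, wHigh_Ea h23 h1, wHigh_Ec h23 h1, ← ENNReal.ofReal_mul h0]
    have hbd : mk4 (wHigh p) (Eb ∩ Ed) = mk4 (wHigh p) Eb * mk4 (wHigh p) Ed := by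
      rw [wHigh_bd h23 h1, wHigh_Eb h23 h1, wHigh_Ed h23 h1, ← ENNReal.ofReal_mul h0]
    exact kindep_of _ (indep_single _ ea ec hac) (indep_single _ eb ed hbd)
  · rintro ⟨e, he⟩
    rcases (mem_edgeSet4 e).1 he with rfl | rfl | rfl | rfl
    · exact le_of_eq (wHigh_Ea h23 h1)
    · exact le_of_eq (wHigh_Eb h23 h1)
    · exact le_of_eq (wHigh_Ec h23 h1)
    · exact le_of_eq (wHigh_Ed h23 h1)

lemma low_mem (h0 : 0 ≤ p) (h23 : p ≤ 2/3) :
    mk4 (wLow p) ∈ MLe G4 1 p := by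
  have hprob : IsProbabilityMeasure (mk4 (wLow p)) := ⟨wLow_univ h0 h23⟩
  refine ⟨hprob, ?_, ?_⟩
  · have hac : mk4 (wLow p) (Ea ∩ Ec) = mk4 (wLow p) Ea * mk4 (wLow p) Ec := by
      rw [wLow_ac h0 h23, wLow_Ea h0 h23, wLow_Ec h0 h23, ← ENNReal.ofReal_mul h0]
    have hbd : mk4 (wLow p) (Eb ∩ Ed) = mk4 (wLow p) Eb * mk4 (wLow p) Ed := by
      rw [wLow_bd h0 h23, wLow_Eb h0 h23, wLow_Ed h0 h23, ← ENNReal.ofReal_mul h0]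
    exact kindep_of _ (indep_single _ ea ec hac) (indep_single _ eb ed hbd)
  · rintro ⟨e, he⟩
    rcases (mem_edgeSet4 e).1 he with rfl | rfl | rfl | rfl
    · exact le_of_eq (wLow_Ea h0 h23)
    · exact le_of_eq (wLow_Eb h0 h23)
    · exact le_of_eq (wLow_Ec h0 h23)
    · exact le_of_eq (wLow_Ed h0 h23)

/-! Upper bounds for arbitrary measures in `MLe` -/

lemma indep_events (μ : Measure (Config G4)) [IsProbabilityMeasure μ]
    (hk : KIndepMeasure G4 1 μ) :
    Indep (MeasurableSpace.generateFrom {Ea}) (MeasurableSpace.generateFrom {Ec}) μ ∧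
    Indep (MeasurableSpace.generateFrom {Eb}) (MeasurableSpace.generateFrom {Ed}) μ := by
  have hac := hk {s(0,1)} {s(2,3)} (Set.singleton_subset_iff.2 (by decide))
    (Set.singleton_subset_iff.2 (by decide)) kdistant_ac
  have hbd := hk {s(1,2)} {s(0,3)} (Set.singleton_subset_iff.2 (by decide))
    (Set.singleton_subset_iff.2 (by decide)) kdistant_bd
  constructor
  · unfold Ea Ec
    rw [← cylinderSigma_singleton G4 ea, ← cylinderSigma_singleton G4 ec]
    exact hac
  · unfold Eb Ed
    rw [← cylinderSigma_singleton G4 eb, ← cylinderSigma_singleton G4 ed]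
    exact hbd

lemma bound_high (hp0 : 0 ≤ p) (hp1 : p ≤ 1) (μ : Measure (Config G4))
    (hμ : μ ∈ MLe G4 1 p) : μ EconnB ≤ ENNReal.ofReal (2*p - p^2) := by
  obtain ⟨hprob, hk, hm⟩ := hμ
  haveI := hprob
  obtain ⟨hac, -⟩ := indep_events μ hk
  have mEa : MeasurableSet[MeasurableSpace.generateFrom {Ea}] Ea :=
    MeasurableSpace.measurableSet_generateFrom (Set.mem_singleton _)
  have mEc : MeasurableSet[MeasurableSpace.generateFrom {Ec}] Ec :=
    MeasurableSpace.measurableSet_generateFrom (Set.mem_singleton _)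
  have prodC : μ (Eaᶜ ∩ Ecᶜ) = μ Eaᶜ * μ Ecᶜ :=
    (Indep_iff _ _ μ).1 hac _ _ mEa.compl mEc.compl
  have hsub : EconnB ⊆ (Eaᶜ ∩ Ecᶜ)ᶜ := by
    intro ω hω
    simp only [EconnB, Set.mem_setOf_eq] at hω
    simp only [Set.mem_compl_iff, Set.mem_inter_iff, Ea, Ec, Set.mem_setOf_eq, not_and]
    cases hA : ω ea <;> cases hC : ω ec <;> simp_all
  have hEac : ENNReal.ofReal (1-p) ≤ μ Eaᶜ := by
    rw [prob_compl_eq_one_sub MeasurableSet.of_discrete,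
      show ENNReal.ofReal (1-p) = 1 - ENNReal.ofReal p by
        rw [ENNReal.ofReal_sub _ hp0, ENNReal.ofReal_one]]
    exact tsub_le_tsub_left (hm ea) 1
  have hEcc : ENNReal.ofReal (1-p) ≤ μ Ecᶜ := by
    rw [prob_compl_eq_one_sub MeasurableSet.of_discrete,
      show ENNReal.ofReal (1-p) = 1 - ENNReal.ofReal p by
        rw [ENNReal.ofReal_sub _ hp0, ENNReal.ofReal_one]]
    exact tsub_le_tsub_left (hm ec) 1
  calc μ EconnB ≤ μ ((Eaᶜ ∩ Ecᶜ)ᶜ) := measure_mono hsub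
    _ = 1 - μ (Eaᶜ ∩ Ecᶜ) := prob_compl_eq_one_sub MeasurableSet.of_discrete
    _ = 1 - μ Eaᶜ * μ Ecᶜ := by rw [prodC]
    _ ≤ 1 - ENNReal.ofReal (1-p) * ENNReal.ofReal (1-p) :=
        tsub_le_tsub_left (mul_le_mul' hEac hEcc) 1
    _ = ENNReal.ofReal (2*p - p^2) := by
        rw [← ENNReal.ofReal_mul (by linarith)]
        rw [show (2*p - p^2 : ℝ) = 1 - (1-p)*(1-p) by ring]
        rw [ENNReal.ofReal_sub _ (by nlinarith), ENNReal.ofReal_one]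

lemma bound_low (hp0 : 0 ≤ p) (μ : Measure (Config G4))
    (hμ : μ ∈ MLe G4 1 p) : μ EconnB ≤ ENNReal.ofReal (2*p^2) := by
  obtain ⟨hprob, hk, hm⟩ := hμ
  haveI := hprob
  obtain ⟨hac, hbd⟩ := indep_events μ hk
  have mEa : MeasurableSet[MeasurableSpace.generateFrom {Ea}] Ea :=
    MeasurableSpace.measurableSet_generateFrom (Set.mem_singleton _)
  have mEb : MeasurableSet[MeasurableSpace.generateFrom {Eb}] Eb :=
    MeasurableSpace.measurableSet_generateFrom (Set.mem_singleton _)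
  have mEc : MeasurableSet[MeasurableSpace.generateFrom {Ec}] Ec :=
    MeasurableSpace.measurableSet_generateFrom (Set.mem_singleton _)
  have mEd : MeasurableSet[MeasurableSpace.generateFrom {Ed}] Ed :=
    MeasurableSpace.measurableSet_generateFrom (Set.mem_singleton _)
  have prodAC : μ (Ea ∩ Ec) = μ Ea * μ Ec := (Indep_iff _ _ μ).1 hac _ _ mEa mEc
  have prodBD : μ (Eb ∩ Ed) = μ Eb * μ Ed := (Indep_iff _ _ μ).1 hbd _ _ mEb mEd
  have hsub : EconnB ⊆ (Ea ∩ Ec) ∪ (Eb ∩ Ed) := by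
    intro ω hω
    simp only [EconnB, Set.mem_setOf_eq] at hω
    simp only [Set.mem_union, Set.mem_inter_iff, Ea, Eb, Ec, Ed, Set.mem_setOf_eq]
    cases hA : ω ea <;> cases hB : ω eb <;> cases hC : ω ec <;> cases hD : ω ed <;> simp_all
  calc μ EconnB ≤ μ ((Ea ∩ Ec) ∪ (Eb ∩ Ed)) := measure_mono hsub
    _ ≤ μ (Ea ∩ Ec) + μ (Eb ∩ Ed) := measure_union_le _ _
    _ = μ Ea * μ Ec + μ Eb * μ Ed := by rw [prodAC, prodBD]
    _ ≤ ENNReal.ofReal p * ENNReal.ofReal p + ENNReal.ofReal p * ENNReal.ofReal p :=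
        add_le_add (mul_le_mul' (hm ea) (hm ec)) (mul_le_mul' (hm eb) (hm ed))
    _ = ENNReal.ofReal (2*p^2) := by
        rw [← ENNReal.ofReal_mul hp0, ← ENNReal.ofReal_add (by nlinarith) (by nlinarith)]
        congr 1
        ring

end C4Measures
theorem connFunMax_cycleGraph_four (p : ℝ) (hp : p ∈ Set.Icc (0:ℝ) 1) :
    (2 / 3 ≤ p → connFunMax (SimpleGraph.cycleGraph 4) 1 p = 2 * p - p ^ 2) ∧
    (p ≤ 2 / 3 → connFunMax (SimpleGraph.cycleGraph 4) 1 p = 2 * p ^ 2) := by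
  obtain ⟨hp0, hp1⟩ := hp
  constructor
  · intro h23
    have hval : (0:ℝ) ≤ 2*p - p^2 := by nlinarith
    apply IsGreatest.csSup_eq
    constructor
    · refine ⟨mk4 (wHigh p), high_mem hp0 h23 hp1, ?_⟩
      rw [show {ω | (openSubgraph (SimpleGraph.cycleGraph 4) ω).Connected} = EconnB from Econn_eq,
        wHigh_conn h23 hp1, ENNReal.toReal_ofReal hval]
    · rintro x ⟨μ, hμ, rfl⟩
      apply ENNReal.toReal_le_of_le_ofReal hval
      rw [show {ω | (openSubgraph (SimpleGraph.cycleGraph 4) ω).Connected} = EconnB from Econn_eq]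
      exact bound_high hp0 hp1 μ hμ
  · intro h23
    have hval : (0:ℝ) ≤ 2*p^2 := by nlinarith
    apply IsGreatest.csSup_eq
    constructor
    · refine ⟨mk4 (wLow p), low_mem hp0 h23, ?_⟩
      rw [show {ω | (openSubgraph (SimpleGraph.cycleGraph 4) ω).Connected} = EconnB from Econn_eq,
        wLow_conn hp0 h23, ENNReal.toReal_ofReal hval]
    · rintro x ⟨μ, hμ, rfl⟩
      apply ENNReal.toReal_le_of_le_ofReal hval
      rw [show {ω | (openSubgraph (SimpleGraph.cycleGraph 4) ω).Connected} = EconnB from Econn_eq]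
      exact bound_low hp0 μ hμ

end OneIndep
end

section
/- For all integers k ≥ 2 and n ≥ 2, and all p ∈ [0,1], the k-independent connectivity function of the complete graph satisfies f_{k,K_n}(p) = 0 if p ≤ 1 − 2/n, and f_{k,K_n}(p) = 1 − n(1−p)/2 otherwise. -/
open MeasureTheory ProbabilityTheory
open scoped ENNReal

namespace OneIndep

variable {V : Type*}

-- sets measurable w.r.t. the cylinder σ-algebra of the empty edge set are trivial
lemma cylinder_empty_trivial (G : SimpleGraph V) (t : Set (Config G))
    (ht : MeasurableSet[cylinderSigma G (∅ : Set (Sym2 V))] t) : t = ∅ ∨ t = Set.univ := by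
  obtain ⟨s, -, rfl⟩ := ht
  set f : Config G → ({e : G.edgeSet // (e : Sym2 V) ∈ (∅ : Set (Sym2 V))} → Bool) :=
    fun ω e => ω e with hf
  have hconst : ∀ ω ω' : Config G, f ω = f ω' := by
    intro ω ω'; funext e; exact absurd e.2 (Set.notMem_empty _)
  by_cases h : f (fun _ => true) ∈ s
  · right; ext ω; simp only [Set.mem_preimage, Set.mem_univ, iff_true]
    rw [hconst ω (fun _ => true)]; exact h
  · left; ext ω; simp only [Set.mem_preimage, Set.mem_empty_iff_false, iff_false]
    rw [hconst ω (fun _ => true)]; exact h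

lemma indep_of_left_empty (G : SimpleGraph V) (μ : Measure (Config G))
    [IsProbabilityMeasure μ] (m₂ : MeasurableSpace (Config G)) :
    Indep (cylinderSigma G (∅ : Set (Sym2 V))) m₂ μ := by
  rw [Indep_iff]
  intro t1 t2 ht1 _
  rcases cylinder_empty_trivial G t1 ht1 with rfl | rfl
  · simp
  · simp

lemma kIndep_of_prob {n k : ℕ} (hk : 2 ≤ k)
    (μ : Measure (Config (⊤ : SimpleGraph (Fin n)))) [IsProbabilityMeasure μ] :
    KIndepMeasure (⊤ : SimpleGraph (Fin n)) k μ := by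
  intro F₁ F₂ h₁ h₂ ⟨hd, hdist⟩
  have hempty : F₁ = ∅ ∨ F₂ = ∅ := by
    by_contra h
    push_neg at h
    obtain ⟨hne₁, hne₂⟩ := h
    obtain ⟨e₁, he₁⟩ := hne₁
    obtain ⟨e₂, he₂⟩ := hne₂
    obtain ⟨u, hu'⟩ : (endpointsOf F₁).Nonempty := ⟨e₁.out.1, e₁, he₁, Sym2.out_fst_mem e₁⟩
    obtain ⟨v, hv'⟩ : (endpointsOf F₂).Nonempty := ⟨e₂.out.1, e₂, he₂, Sym2.out_fst_mem e₂⟩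
    rcases eq_or_ne u v with rfl | huv
    · have := hdist u hu' u hv' SimpleGraph.Walk.nil
      simp at this; omega
    · have hadj : (⊤ : SimpleGraph (Fin n)).Adj u v := by simpa using huv
      have := hdist u hu' v hv' (hadj.toWalk)
      simp at this; omega
  rcases hempty with rfl | rfl
  · exact indep_of_left_empty _ μ _
  · exact (indep_of_left_empty _ μ _).symm

lemma card_not_mem_sym2 {n : ℕ} (e : Sym2 (Fin n)) (he : ¬ e.IsDiag) :
    (Finset.univ.filter (fun v : Fin n => v ∉ e)).card = n - 2 := by
  induction e with
  | _ a b =>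
    rw [Sym2.mk_isDiag_iff] at he
    rw [Finset.filter_not, Finset.card_sdiff_of_subset (Finset.filter_subset _ _)]
    have : Finset.univ.filter (fun v : Fin n => v ∈ s(a, b)) = {a, b} := by
      ext v; simp [Sym2.mem_iff]
    rw [this, Finset.card_pair he, Finset.card_univ, Fintype.card_fin]

-- disconnected configurations have at least n-1 closed edges
lemma card_closed_ge {n : ℕ} (hn : 2 ≤ n) (ω : Config (⊤ : SimpleGraph (Fin n)))
    (hω : ¬ (openSubgraph (⊤ : SimpleGraph (Fin n)) ω).Connected) :
    n - 1 ≤ (Finset.univ.filter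
      (fun e : (⊤ : SimpleGraph (Fin n)).edgeSet => ω e = false)).card := by
  classical
  have hne : Nonempty (Fin n) := ⟨⟨0, by omega⟩⟩
  rw [SimpleGraph.connected_iff] at hω
  push_neg at hω
  have hpre := hω
  replace hpre : ¬ (openSubgraph (⊤ : SimpleGraph (Fin n)) ω).Preconnected :=
    fun h => (isEmpty_iff.mp (hω h)) hne.some
  rw [SimpleGraph.Preconnected] at hpre
  push_neg at hpre
  obtain ⟨u, v, huv⟩ := hpre
  set S : Set (Fin n) := {x | (openSubgraph (⊤ : SimpleGraph (Fin n)) ω).Reachable u x} with hS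
  have hu : u ∈ S := SimpleGraph.Reachable.refl u
  have hv : v ∉ S := huv
  have hcut : ∀ a ∈ S, ∀ b, b ∉ S →
      ∃ h : s(a, b) ∈ (⊤ : SimpleGraph (Fin n)).edgeSet, ω ⟨s(a, b), h⟩ = false := by
    intro a ha b hb
    have hab : a ≠ b := fun h => hb (h ▸ ha)
    have hmem : s(a, b) ∈ (⊤ : SimpleGraph (Fin n)).edgeSet := by simpa using hab
    refine ⟨hmem, ?_⟩
    by_contra habs
    rw [Bool.not_eq_false] at habs
    have hadj : (openSubgraph (⊤ : SimpleGraph (Fin n)) ω).Adj a b := by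
      rw [openSubgraph, SimpleGraph.fromEdgeSet_adj]
      exact ⟨⟨hmem, habs⟩, hab⟩
    exact hb (ha.trans hadj.reachable)
  set cf : (⊤ : SimpleGraph (Fin n)).edgeSet → Sym2 (Fin n) := fun e => (e : Sym2 (Fin n)) with hcf
  set g : Fin n → Sym2 (Fin n) := fun x => if x ∈ S then s(x, v) else s(u, x) with hg
  set A : Finset (Fin n) := Finset.univ.filter (· ≠ v) with hA
  set B : Finset (⊤ : SimpleGraph (Fin n)).edgeSet :=
    Finset.univ.filter (fun e : (⊤ : SimpleGraph (Fin n)).edgeSet => ω e = false) with hB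
  have hginj : Set.InjOn g A := by
    intro x hx y hy hxy
    simp only [hA, Finset.coe_filter, Set.mem_setOf_eq, Finset.mem_univ, true_and] at hx hy
    by_cases hxS : x ∈ S <;> by_cases hyS : y ∈ S <;>
      simp only [hg, hxS, hyS, if_true, if_false, Sym2.eq_iff] at hxy
    · rcases hxy with ⟨h1, -⟩ | ⟨h1, h2⟩
      · exact h1
      · exact absurd h2.symm hy
    · rcases hxy with ⟨h1, h2⟩ | ⟨h1, h2⟩
      · exact absurd h2.symm hy
      · exact absurd (h1 ▸ hxS) hyS
    · rcases hxy with ⟨h1, h2⟩ | ⟨h1, h2⟩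
      · exact absurd h2 hx
      · exact absurd (h2 ▸ hyS) hxS
    · rcases hxy with ⟨-, h2⟩ | ⟨h1, h2⟩
      · exact h2
      · exact absurd (h1.symm ▸ hu) hyS
  have hsub : A.image g ⊆ Finset.image cf B := by
    intro e he
    rw [Finset.mem_image] at he
    obtain ⟨x, hx, rfl⟩ := he
    by_cases hxS : x ∈ S
    · obtain ⟨h, hclosed⟩ := hcut x hxS v hv
      have hmemB : (⟨s(x, v), h⟩ : (⊤ : SimpleGraph (Fin n)).edgeSet) ∈ B := by
        rw [hB, Finset.mem_filter]
        exact ⟨Finset.mem_univ _, hclosed⟩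
      have hgx : g x = ((⟨s(x, v), h⟩ : (⊤ : SimpleGraph (Fin n)).edgeSet) : Sym2 (Fin n)) := by
        simp [hg, hxS]
      rw [hgx]
      exact Finset.mem_image_of_mem cf hmemB
    · obtain ⟨h, hclosed⟩ := hcut u hu x hxS
      have hmemB : (⟨s(u, x), h⟩ : (⊤ : SimpleGraph (Fin n)).edgeSet) ∈ B := by
        rw [hB, Finset.mem_filter]
        exact ⟨Finset.mem_univ _, hclosed⟩
      have hgx : g x = ((⟨s(u, x), h⟩ : (⊤ : SimpleGraph (Fin n)).edgeSet) : Sym2 (Fin n)) := by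
        simp [hg, hxS]
      rw [hgx]
      exact Finset.mem_image_of_mem cf hmemB
  have hcard : n - 1 ≤ (A.image g).card := by
    rw [Finset.card_image_of_injOn hginj]
    have : A = Finset.univ.erase v := by
      ext x; simp [hA, Finset.mem_erase]
    rw [this, Finset.card_erase_of_mem (Finset.mem_univ v), Finset.card_univ, Fintype.card_fin]
  calc n - 1 ≤ (A.image g).card := hcard
    _ ≤ (Finset.image cf B).card := Finset.card_le_card hsub
    _ = B.card := Finset.card_image_of_injective _ Subtype.coe_injective

/-- everything is measurable on the configuration space of a finite graph -/
lemma measurableSet_config {n : ℕ} (s : Set (Config (⊤ : SimpleGraph (Fin n)))) :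
    MeasurableSet s :=
  s.to_countable.measurableSet

/-- the all-open configuration -/
def ωall {n : ℕ} : Config (⊤ : SimpleGraph (Fin n)) := fun _ => true

/-- the configuration in which precisely the edges at `v` are closed -/
noncomputable def ωvert {n : ℕ} (v : Fin n) : Config (⊤ : SimpleGraph (Fin n)) :=
  fun e => if v ∈ (e : Sym2 (Fin n)) then false else true

/-- the minimizing measure -/
noncomputable def muMin (n : ℕ) (q : ℝ) : Measure (Config (⊤ : SimpleGraph (Fin n))) :=
  ENNReal.ofReal (1 - q) • Measure.dirac ωall +
    ∑ v : Fin n, ENNReal.ofReal (q / n) • Measure.dirac (ωvert v)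

lemma muMin_apply (n : ℕ) (q : ℝ) (s : Set (Config (⊤ : SimpleGraph (Fin n)))) :
    muMin n q s = ENNReal.ofReal (1 - q) * s.indicator 1 ωall +
      ∑ v : Fin n, ENNReal.ofReal (q / n) * s.indicator 1 (ωvert v) := by
  simp [muMin, Measure.add_apply, Measure.smul_apply, Measure.finset_sum_apply,
    Measure.dirac_apply, smul_eq_mul]

lemma muMin_isProb {n : ℕ} (hn : 2 ≤ n) {q : ℝ} (hq0 : 0 ≤ q) (hq1 : q ≤ 1) :
    IsProbabilityMeasure (muMin n q) := by
  constructor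
  rw [muMin_apply]
  have hnne : (n : ℝ) ≠ 0 := by positivity
  rw [Set.indicator_univ]
  simp only [Pi.one_apply, mul_one, Finset.sum_const, Finset.card_univ, Fintype.card_fin,
    nsmul_eq_mul]
  rw [← ENNReal.ofReal_natCast n, ← ENNReal.ofReal_mul (by positivity),
    ← ENNReal.ofReal_add (by linarith) (by positivity)]
  rw [show (n : ℝ) * (q / n) = q by field_simp]
  norm_num

lemma muMin_marginal {n : ℕ} (hn : 2 ≤ n) {q : ℝ} (hq0 : 0 ≤ q)
    (e : (⊤ : SimpleGraph (Fin n)).edgeSet) :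
    muMin n q {ω | ω e = true} =
      ENNReal.ofReal (1 - q) + ENNReal.ofReal (((n : ℝ) - 2) * (q / n)) := by
  rw [muMin_apply]
  have h1 : ({ω : Config (⊤ : SimpleGraph (Fin n)) | ω e = true}).indicator
      (1 : Config (⊤ : SimpleGraph (Fin n)) → ℝ≥0∞) ωall = 1 := by
    have hmem : ωall ∈ {ω : Config (⊤ : SimpleGraph (Fin n)) | ω e = true} := rfl
    rw [Set.indicator_of_mem hmem]; rfl
  have h2 : ∀ v : Fin n, ({ω : Config (⊤ : SimpleGraph (Fin n)) | ω e = true}).indicator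
      (1 : Config (⊤ : SimpleGraph (Fin n)) → ℝ≥0∞) (ωvert v) = if v ∈ (e : Sym2 (Fin n)) then 0 else 1 := by
    intro v
    by_cases h : v ∈ (e : Sym2 (Fin n))
    · rw [if_pos h, Set.indicator_of_notMem]
      simp [ωvert, h]
    · rw [if_neg h, Set.indicator_of_mem]
      · rfl
      · simp [ωvert, h]
  rw [h1, mul_one]
  simp only [h2, mul_ite, mul_zero, mul_one]
  rw [Finset.sum_ite, Finset.sum_const_zero, zero_add, Finset.sum_const, nsmul_eq_mul]
  congr 1
  rw [card_not_mem_sym2 (e : Sym2 (Fin n)) (by simpa using e.2)]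
  rw [← ENNReal.ofReal_natCast, ← ENNReal.ofReal_mul (by positivity)]
  congr 1
  rw [Nat.cast_sub hn]
  norm_num

lemma openSubgraph_ωall {n : ℕ} :
    openSubgraph (⊤ : SimpleGraph (Fin n)) ωall = ⊤ := by
  ext v w
  simp [openSubgraph, SimpleGraph.fromEdgeSet_adj, ωall, SimpleGraph.mem_edgeSet, and_comm]

lemma ωall_connected {n : ℕ} (hn : 2 ≤ n) :
    (openSubgraph (⊤ : SimpleGraph (Fin n)) ωall).Connected := by
  have : Nonempty (Fin n) := ⟨⟨0, by omega⟩⟩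
  rw [openSubgraph_ωall]
  exact SimpleGraph.connected_top

lemma ωvert_disconnected {n : ℕ} (hn : 2 ≤ n) (v : Fin n) :
    ¬ (openSubgraph (⊤ : SimpleGraph (Fin n)) (ωvert v)).Connected := by
  intro h
  obtain ⟨w, hw⟩ := Fintype.exists_ne_of_one_lt_card (by simp; omega) v
  obtain ⟨pth⟩ := h.preconnected v w
  have hnn : ¬ pth.Nil := SimpleGraph.Walk.not_nil_of_ne (Ne.symm hw)
  have hadj := pth.adj_snd hnn
  simp only [openSubgraph, SimpleGraph.fromEdgeSet_adj] at hadj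
  obtain ⟨⟨hm, ht⟩, -⟩ := hadj
  rw [ωvert, if_pos (Sym2.mem_mk_left _ _)] at ht
  exact Bool.false_ne_true ht

lemma muMin_conn {n : ℕ} (hn : 2 ≤ n) {q : ℝ} :
    muMin n q {ω | (openSubgraph (⊤ : SimpleGraph (Fin n)) ω).Connected} =
      ENNReal.ofReal (1 - q) := by
  rw [muMin_apply]
  have hmem : ωall ∈ {ω | (openSubgraph (⊤ : SimpleGraph (Fin n)) ω).Connected} :=
    ωall_connected hn
  rw [Set.indicator_of_mem hmem, Pi.one_apply, mul_one]
  have : ∀ v : Fin n, ({ω | (openSubgraph (⊤ : SimpleGraph (Fin n)) ω).Connected}).indicator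
      (1 : Config (⊤ : SimpleGraph (Fin n)) → ℝ≥0∞) (ωvert v) = 0 := by
    intro v
    have hnm : ωvert v ∉ {ω | (openSubgraph (⊤ : SimpleGraph (Fin n)) ω).Connected} :=
      ωvert_disconnected hn v
    exact Set.indicator_of_notMem hnm _
  simp [this]

lemma measure_not_connected_le {n : ℕ} (hn : 2 ≤ n) {p : ℝ} (hp0 : 0 ≤ p)
    (μ : Measure (Config (⊤ : SimpleGraph (Fin n)))) [IsProbabilityMeasure μ]
    (hmarg : ∀ e : (⊤ : SimpleGraph (Fin n)).edgeSet, ENNReal.ofReal p ≤ μ {ω | ω e = true}) :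
    μ {ω | ¬ (openSubgraph (⊤ : SimpleGraph (Fin n)) ω).Connected} ≤
      ENNReal.ofReal ((n : ℝ) * (1 - p) / 2) := by
  classical
  set D := {ω : Config (⊤ : SimpleGraph (Fin n)) |
    ¬ (openSubgraph (⊤ : SimpleGraph (Fin n)) ω).Connected} with hD
  -- pointwise bound
  have hpt : ∀ ω : Config (⊤ : SimpleGraph (Fin n)),
      D.indicator (fun _ => ((n - 1 : ℕ) : ℝ≥0∞)) ω ≤
      ∑ e : (⊤ : SimpleGraph (Fin n)).edgeSet,
        ({ω' : Config (⊤ : SimpleGraph (Fin n)) | ω' e = false}).indicator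
          (fun _ => (1 : ℝ≥0∞)) ω := by
    intro ω
    by_cases hω : ω ∈ D
    · rw [Set.indicator_of_mem hω]
      have hsum : ∑ e : (⊤ : SimpleGraph (Fin n)).edgeSet,
          ({ω' : Config (⊤ : SimpleGraph (Fin n)) | ω' e = false}).indicator
            (fun _ => (1 : ℝ≥0∞)) ω
          = ((Finset.univ.filter
            (fun e : (⊤ : SimpleGraph (Fin n)).edgeSet => ω e = false)).card : ℝ≥0∞) := by
        rw [← Finset.sum_boole]
        refine Finset.sum_congr rfl ?_
        intro e _
        by_cases h : ω ∈ {ω' : Config (⊤ : SimpleGraph (Fin n)) | ω' e = false}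
        · rw [Set.indicator_of_mem h]
          exact (if_pos h).symm
        · rw [Set.indicator_of_notMem h]
          exact (if_neg h).symm
      rw [hsum]
      exact_mod_cast Nat.cast_le.2 (card_closed_ge hn ω hω)
    · rw [Set.indicator_of_notMem hω]
      exact zero_le
  -- integrate
  have key : ((n - 1 : ℕ) : ℝ≥0∞) * μ D ≤
      ∑ e : (⊤ : SimpleGraph (Fin n)).edgeSet, μ {ω | ω e = false} := by
    have h1 : ((n - 1 : ℕ) : ℝ≥0∞) * μ D =
        ∫⁻ ω, D.indicator (fun _ => ((n - 1 : ℕ) : ℝ≥0∞)) ω ∂μ := by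
      rw [lintegral_indicator (measurableSet_config D), setLIntegral_const]
    have h3 : ∫⁻ ω, (∑ e : (⊤ : SimpleGraph (Fin n)).edgeSet,
        ({ω' : Config (⊤ : SimpleGraph (Fin n)) | ω' e = false}).indicator
          (fun _ => (1 : ℝ≥0∞)) ω) ∂μ
        = ∑ e : (⊤ : SimpleGraph (Fin n)).edgeSet, μ {ω | ω e = false} := by
      rw [lintegral_finset_sum]
      · refine Finset.sum_congr rfl ?_
        intro e _
        exact lintegral_indicator_one (measurableSet_config _)
      · intro e _
        exact (measurable_const.indicator (measurableSet_config _))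
    rw [h1, ← h3]
    exact lintegral_mono hpt
  -- bound each closed-edge probability
  have hclosed : ∀ e : (⊤ : SimpleGraph (Fin n)).edgeSet,
      μ {ω | ω e = false} ≤ ENNReal.ofReal (1 - p) := by
    intro e
    have hcompl : {ω : Config (⊤ : SimpleGraph (Fin n)) | ω e = false} =
        {ω : Config (⊤ : SimpleGraph (Fin n)) | ω e = true}ᶜ := by
      ext ω; simp
    rw [hcompl, prob_compl_eq_one_sub (measurableSet_config _)]
    calc 1 - μ {ω | ω e = true} ≤ 1 - ENNReal.ofReal p := tsub_le_tsub_left (hmarg e) 1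
      _ = ENNReal.ofReal (1 - p) := by
          rw [ENNReal.ofReal_sub 1 hp0, ENNReal.ofReal_one]
  -- count edges
  have hcard : Fintype.card (⊤ : SimpleGraph (Fin n)).edgeSet = n.choose 2 := by
    rw [← SimpleGraph.edgeFinset_card, SimpleGraph.card_edgeFinset_top_eq_card_choose_two,
      Fintype.card_fin]
  have key2 : ((n - 1 : ℕ) : ℝ≥0∞) * μ D ≤
      ENNReal.ofReal ((n.choose 2 : ℝ) * (1 - p)) := by
    calc ((n - 1 : ℕ) : ℝ≥0∞) * μ D
        ≤ ∑ e : (⊤ : SimpleGraph (Fin n)).edgeSet, μ {ω | ω e = false} := key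
      _ ≤ ∑ _e : (⊤ : SimpleGraph (Fin n)).edgeSet, ENNReal.ofReal (1 - p) :=
          Finset.sum_le_sum (fun e _ => hclosed e)
      _ = (n.choose 2 : ℝ≥0∞) * ENNReal.ofReal (1 - p) := by
          rw [Finset.sum_const, Finset.card_univ, hcard, nsmul_eq_mul]
      _ = ENNReal.ofReal ((n.choose 2 : ℝ) * (1 - p)) := by
          rw [← ENNReal.ofReal_natCast, ← ENNReal.ofReal_mul (by positivity)]
  -- divide by n - 1
  have hn1pos : (0 : ℝ) < ((n - 1 : ℕ) : ℝ) := by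
    have : 1 ≤ n - 1 := by omega
    exact_mod_cast Nat.lt_of_lt_of_le Nat.zero_lt_one this
  have hfin : ((n - 1 : ℕ) : ℝ≥0∞) ≠ ⊤ := ENNReal.natCast_ne_top _
  have hne : ((n - 1 : ℕ) : ℝ≥0∞) ≠ 0 := by
    simp only [ne_eq, Nat.cast_eq_zero]
    omega
  have hdiv : μ D ≤ ENNReal.ofReal ((n.choose 2 : ℝ) * (1 - p)) / ((n - 1 : ℕ) : ℝ≥0∞) :=
    (ENNReal.le_div_iff_mul_le (Or.inl hne) (Or.inl hfin)).2 (by rwa [mul_comm])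
  refine hdiv.trans (le_of_eq ?_)
  rw [← ENNReal.ofReal_natCast (n - 1), ← ENNReal.ofReal_div_of_pos hn1pos]
  congr 1
  have hc2 : (n.choose 2 : ℝ) = (n : ℝ) * ((n : ℝ) - 1) / 2 := by
    rw [Nat.cast_choose_two]
  have hcast : ((n - 1 : ℕ) : ℝ) = (n : ℝ) - 1 := by
    rw [Nat.cast_sub (by omega), Nat.cast_one]
  rw [hc2, hcast]
  have : (n : ℝ) - 1 ≠ 0 := by
    have : (2 : ℝ) ≤ (n : ℝ) := by exact_mod_cast hn
    linarith
  field_simp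


lemma measure_connected_ge {n : ℕ} (hn : 2 ≤ n) {p : ℝ} (hp0 : 0 ≤ p) (hp1 : p ≤ 1)
    (μ : Measure (Config (⊤ : SimpleGraph (Fin n)))) [IsProbabilityMeasure μ]
    (hmarg : ∀ e : (⊤ : SimpleGraph (Fin n)).edgeSet, ENNReal.ofReal p ≤ μ {ω | ω e = true}) :
    ENNReal.ofReal (1 - (n : ℝ) * (1 - p) / 2) ≤
      μ {ω | (openSubgraph (⊤ : SimpleGraph (Fin n)) ω).Connected} := by
  have hcompl : {ω : Config (⊤ : SimpleGraph (Fin n)) |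
      (openSubgraph (⊤ : SimpleGraph (Fin n)) ω).Connected} =
      {ω : Config (⊤ : SimpleGraph (Fin n)) |
        ¬ (openSubgraph (⊤ : SimpleGraph (Fin n)) ω).Connected}ᶜ := by
    ext ω; simp
  rw [hcompl, prob_compl_eq_one_sub (measurableSet_config _)]
  have h0 : (0 : ℝ) ≤ (n : ℝ) * (1 - p) / 2 := by
    have : (0 : ℝ) ≤ (n : ℝ) := by positivity
    have h1p : (0 : ℝ) ≤ 1 - p := by linarith
    positivity
  calc ENNReal.ofReal (1 - (n : ℝ) * (1 - p) / 2)
      = 1 - ENNReal.ofReal ((n : ℝ) * (1 - p) / 2) := by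
        rw [ENNReal.ofReal_sub 1 h0, ENNReal.ofReal_one]
    _ ≤ 1 - μ {ω : Config (⊤ : SimpleGraph (Fin n)) |
          ¬ (openSubgraph (⊤ : SimpleGraph (Fin n)) ω).Connected} :=
        tsub_le_tsub_left (measure_not_connected_le hn hp0 μ hmarg) 1


theorem connFun_completeGraph_kIndep (k n : ℕ) (hk : 2 ≤ k) (hn : 2 ≤ n)
    (p : ℝ) (hp : p ∈ Set.Icc (0:ℝ) 1) :
    connFun (⊤ : SimpleGraph (Fin n)) k p =
      if p ≤ 1 - 2 / n then 0 else 1 - n * (1 - p) / 2 := by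
  obtain ⟨hp0, hp1⟩ := hp
  have hn0 : (0 : ℝ) < (n : ℝ) := by
    have : 0 < n := by omega
    exact_mod_cast this
  have hn2 : (2 : ℝ) ≤ (n : ℝ) := by exact_mod_cast hn
  set r : ℝ := (n : ℝ) * (1 - p) / 2 with hr
  have hr0 : 0 ≤ r := div_nonneg (mul_nonneg hn0.le (by linarith)) (by norm_num)
  set q : ℝ := min 1 r with hq
  have hq0 : 0 ≤ q := le_min zero_le_one hr0
  have hq1 : q ≤ 1 := min_le_left _ _
  have hqr : q ≤ r := min_le_right _ _
  haveI hPM : IsProbabilityMeasure (muMin n q) := muMin_isProb hn hq0 hq1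
  have hmargq : ∀ e : (⊤ : SimpleGraph (Fin n)).edgeSet,
      ENNReal.ofReal p ≤ muMin n q {ω | ω e = true} := by
    intro e
    rw [muMin_marginal hn hq0 e]
    have harith : p ≤ 1 - q + ((n : ℝ) - 2) * (q / n) := by
      have hqn : ((n : ℝ) - 2) * (q / n) = q - 2 * q / n := by field_simp
      rw [hqn]
      have h2 : 2 * q / n ≤ 1 - p := by
        rw [div_le_iff₀ hn0]
        nlinarith
      linarith
    calc ENNReal.ofReal p ≤ ENNReal.ofReal (1 - q + ((n : ℝ) - 2) * (q / n)) :=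
          ENNReal.ofReal_le_ofReal harith
      _ = ENNReal.ofReal (1 - q) + ENNReal.ofReal (((n : ℝ) - 2) * (q / n)) :=
          ENNReal.ofReal_add (by linarith)
            (mul_nonneg (by linarith) (div_nonneg hq0 hn0.le))
  have hmem : muMin n q ∈ MGe (⊤ : SimpleGraph (Fin n)) k p :=
    ⟨hPM, kIndep_of_prob hk _, hmargq⟩
  have hofReal_eq : ENNReal.ofReal (1 - q) = ENNReal.ofReal (1 - r) := by
    rcases le_total r 1 with h | h
    · rw [hq, min_eq_right h]
    · rw [hq, min_eq_left h, sub_self, ENNReal.ofReal_zero]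
      exact (ENNReal.ofReal_of_nonpos (by linarith)).symm
  have hval : (muMin n q
      {ω | (openSubgraph (⊤ : SimpleGraph (Fin n)) ω).Connected}).toReal = 1 - q := by
    rw [muMin_conn hn, ENNReal.toReal_ofReal (by linarith)]
  set T : Set ℝ := {x | ∃ μ ∈ MGe (⊤ : SimpleGraph (Fin n)) k p,
    x = (μ {ω | (openSubgraph (⊤ : SimpleGraph (Fin n)) ω).Connected}).toReal} with hT
  have hlb : ∀ x ∈ T, 1 - q ≤ x := by
    rintro x ⟨μ, ⟨hprob, -, hmarg⟩, rfl⟩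
    haveI := hprob
    have hge := measure_connected_ge hn hp0 hp1 μ hmarg
    rw [← hr, ← hofReal_eq] at hge
    exact (ENNReal.ofReal_le_iff_le_toReal (measure_ne_top μ _)).1 hge
  have hmemT : (1 - q) ∈ T := ⟨muMin n q, hmem, hval.symm⟩
  have hsinf : connFun (⊤ : SimpleGraph (Fin n)) k p = 1 - q := by
    have : connFun (⊤ : SimpleGraph (Fin n)) k p = sInf T := rfl
    rw [this]
    exact le_antisymm (csInf_le ⟨1 - q, hlb⟩ hmemT) (le_csInf ⟨_, hmemT⟩ hlb)
  rw [hsinf]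
  by_cases hcase : p ≤ 1 - 2 / (n : ℝ)
  · rw [if_pos hcase]
    have h2n : 2 / (n : ℝ) ≤ 1 - p := by linarith
    rw [div_le_iff₀ hn0] at h2n
    have hr1 : 1 ≤ r := by
      rw [hr]
      rw [le_div_iff₀ (by norm_num : (0:ℝ) < 2)]
      nlinarith
    rw [hq, min_eq_left hr1]
    ring
  · rw [if_neg hcase]
    push_neg at hcase
    have h2n : 1 - p < 2 / (n : ℝ) := by linarith
    rw [lt_div_iff₀ hn0] at h2n
    have hr1 : r ≤ 1 := by
      rw [hr]
      rw [div_le_one (by norm_num : (0:ℝ) < 2)]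
      nlinarith
    rw [hq, min_eq_right hr1]

end OneIndep
end

section
/- For every integer n ≥ 6 and every p ∈ [0,1], the 1-independent connectivity function of the n-cycle satisfies f_{1,C_n}(p) ≥ (np − (n−2))/2. -/
open MeasureTheory ProbabilityTheory

namespace OneIndep

variable {V : Type*}

open SimpleGraph in
lemma cycle_minus_edge_connected_aux (m : ℕ) (a : Fin (m + 3)) (H : SimpleGraph (Fin (m + 3)))
    (hH : ∀ u v : Fin (m + 3), (cycleGraph (m + 3)).Adj u v → s(u, v) ≠ s(a, a + 1) → H.Adj u v) :
    H.Connected := by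
  set c : Fin (m + 3) := a + 1 with hc
  have hPconn : ((pathGraph (m + 3)).comap (fun x => x - c)).Connected := by
    have e : (pathGraph (m + 3)).comap (fun x : Fin (m+3) => x - c) ≃g pathGraph (m + 3) :=
      Iso.comap (Equiv.subRight c) (pathGraph (m + 3))
    exact e.connected_iff.mpr (pathGraph_connected (m + 2))
  refine hPconn.mono ?_
  intro u v huv
  have key : ∀ u v : Fin (m + 3), (u - c).val + 1 = (v - c).val → H.Adj u v := by
    intro u v h
    have hvlt : (v - c).val < m + 3 := (v - c).isLt
    have hstep : v - c = (u - c) + 1 := by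
      apply Fin.ext
      rw [Fin.val_add_one_of_lt (by rw [Fin.lt_def, Fin.val_last]; omega)]
      omega
    have hv : v = u + 1 := by
      have h2 := congrArg (· + c) hstep
      simp only [sub_add_cancel] at h2
      rw [h2]; abel
    have hadj : (cycleGraph (m + 3)).Adj u v := by
      rw [hv]
      exact (cycleGraph_adj (n := m + 1)).mpr (Or.inr (by abel))
    refine hH u v hadj ?_
    intro hs
    rw [Sym2.eq_iff] at hs
    rcases hs with ⟨h1, h2⟩ | ⟨h1, h2⟩
    · have hu : u - c = -1 := by rw [h1, hc]; abel
      rw [hu] at h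
      have : ((-1 : Fin (m + 3))).val = m + 2 := Fin.coe_neg_one
      omega
    · have hu0 : u - c = 0 := by rw [h1, hc]; abel
      have hvm : v - c = -1 := by rw [h2, hc]; abel
      rw [hu0, hvm] at h
      have h0 : ((0 : Fin (m + 3))).val = 0 := rfl
      have hm : ((-1 : Fin (m + 3))).val = m + 2 := Fin.coe_neg_one
      omega
  rw [comap_adj, pathGraph_adj] at huv
  rcases huv with h | h
  · exact key u v h
  · exact (key v u h).symm

open SimpleGraph in
/-- If at most one edge of the cycle is closed, the open subgraph is connected. -/
lemma openSubgraph_connected_of_subsingleton (m : ℕ) (ω : Config (cycleGraph (m + 3)))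
    (hω : ∀ e f : (cycleGraph (m + 3)).edgeSet, ω e = false → ω f = false → e = f) :
    (openSubgraph (cycleGraph (m + 3)) ω).Connected := by
  classical
  -- find `a` such that every closed edge equals `s(a, a+1)`
  have hex : ∃ a : Fin (m + 3), ∀ e : (cycleGraph (m + 3)).edgeSet, ω e = false → (e : Sym2 (Fin (m+3))) = s(a, a + 1) := by
    by_cases hcl : ∃ e : (cycleGraph (m + 3)).edgeSet, ω e = false
    · obtain ⟨e₀, he₀⟩ := hcl
      obtain ⟨a, ha⟩ : ∃ a : Fin (m + 3), (e₀ : Sym2 (Fin (m+3))) = s(a, a + 1) := by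
        obtain ⟨e, he⟩ := e₀
        induction e using Sym2.ind with
        | _ x y =>
          rw [SimpleGraph.mem_edgeSet] at he
          rcases (cycleGraph_adj (n := m + 1)).mp he with h | h
          · refine ⟨y, ?_⟩
            have hx : x = y + 1 := by rw [sub_eq_iff_eq_add.mp h]; abel
            show s(x, y) = s(y, y + 1)
            subst hx
            exact Sym2.eq_swap
          · refine ⟨x, ?_⟩
            have hy : y = x + 1 := by rw [sub_eq_iff_eq_add.mp h]; abel
            show s(x, y) = s(x, x + 1)
            subst hy
            rfl
      exact ⟨a, fun e hefalse => by rw [hω e e₀ hefalse he₀]; exact ha⟩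
    · push_neg at hcl
      exact ⟨0, fun e hefalse => absurd hefalse (by simp [hcl e])⟩
  obtain ⟨a, ha⟩ := hex
  apply cycle_minus_edge_connected_aux m a
  intro u v hadj hne
  have hmem : s(u, v) ∈ (cycleGraph (m + 3)).edgeSet := hadj
  have hopen : ω ⟨s(u, v), hmem⟩ = true := by
    by_contra hfalse
    rw [Bool.not_eq_true] at hfalse
    exact hne (ha ⟨s(u,v), hmem⟩ hfalse)
  rw [openSubgraph, SimpleGraph.fromEdgeSet_adj]
  exact ⟨⟨hmem, hopen⟩, hadj.ne⟩

theorem connFun_cycleGraph_ge (n : ℕ) (hn : 6 ≤ n) (p : ℝ) (hp : p ∈ Set.Icc (0:ℝ) 1) :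
    (n * p - (n - 2)) / 2 ≤ connFun (SimpleGraph.cycleGraph n) 1 p := by
  classical
  obtain ⟨m, rfl⟩ : ∃ m, n = m + 3 := ⟨n - 3, by omega⟩
  set G := SimpleGraph.cycleGraph (m + 3) with hG
  -- the set over which the infimum is taken is nonempty
  have hne : {x | ∃ μ ∈ MGe G 1 p, x = (μ {ω | (openSubgraph G ω).Connected}).toReal}.Nonempty := by
    refine ⟨_, Measure.dirac (fun _ => true), ⟨inferInstance, ?_, ?_⟩, rfl⟩
    · intro F₁ F₂ _ _ _
      rw [indep_iff_forall_indepSet]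
      intro s t _ _
      rw [indepSet_iff_measure_inter_eq_mul (MeasurableSet.of_discrete) (MeasurableSet.of_discrete)
        (Measure.dirac (fun _ => true))]
      rw [Measure.dirac_apply, Measure.dirac_apply, Measure.dirac_apply]
      by_cases hs : (fun _ => true) ∈ s <;> by_cases ht : (fun _ => true) ∈ t <;>
        simp [Set.indicator_of_mem, Set.indicator_of_notMem, hs, ht, Set.mem_inter_iff]
    · intro e
      rw [Measure.dirac_apply]
      simp only [Set.mem_setOf_eq, Set.indicator_of_mem]
      exact le_trans (ENNReal.ofReal_le_one.mpr hp.2) le_rfl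
  refine le_csInf hne ?_
  rintro x ⟨μ, ⟨hprob, hindep, hedge⟩, rfl⟩
  haveI := hprob
  set Bad : Set (Config G) :=
    {ω | ∃ e f : G.edgeSet, e ≠ f ∧ ω e = false ∧ ω f = false} with hBad
  set Conn : Set (Config G) := {ω | (openSubgraph G ω).Connected} with hConn
  -- complement of Bad is contained in Conn
  have hsub : Connᶜ ⊆ Bad := by
    intro ω hω
    by_contra hnb
    apply hω
    rw [hBad, Set.mem_setOf_eq] at hnb
    push_neg at hnb
    exact openSubgraph_connected_of_subsingleton m ω
      (fun e f he hf => by by_contra hne'; exact absurd hf (by simpa using hnb e f hne' he))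
  -- 2 * μ Bad ≤ ∑ closed-edge probabilities
  have hcount : (2 : ENNReal) * μ Bad ≤ ∑ e : G.edgeSet, μ {ω | ω e = false} := by
    have h1 : (2 : ENNReal) * μ Bad
        = ∫⁻ ω, Bad.indicator (fun _ => (2 : ENNReal)) ω ∂μ := by
      rw [lintegral_indicator_const MeasurableSet.of_discrete]
    have h2 : ∫⁻ ω, Bad.indicator (fun _ => (2 : ENNReal)) ω ∂μ
        ≤ ∫⁻ ω, ∑ e : G.edgeSet, ({ω' : Config G | ω' e = false}).indicator 1 ω ∂μ := by
      apply lintegral_mono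
      intro ω
      by_cases hω : ω ∈ Bad
      · rw [Set.indicator_of_mem hω]
        obtain ⟨e, f, hef, he, hf⟩ := hω
        calc (2 : ENNReal)
            = ∑ x ∈ ({e, f} : Finset G.edgeSet),
                ({ω' : Config G | ω' x = false}).indicator 1 ω := by
              rw [Finset.sum_pair hef]
              have hm1 : ω ∈ {ω' : Config G | ω' e = false} := he
              have hm2 : ω ∈ {ω' : Config G | ω' f = false} := hf
              rw [Set.indicator_of_mem hm1, Set.indicator_of_mem hm2]
              norm_num
          _ ≤ _ := Finset.sum_le_sum_of_subset (Finset.subset_univ _)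
      · rw [Set.indicator_of_notMem hω]
        exact zero_le
    have h3 : ∫⁻ ω, ∑ e : G.edgeSet, ({ω' : Config G | ω' e = false}).indicator 1 ω ∂μ
        = ∑ e : G.edgeSet, μ {ω | ω e = false} := by
      rw [lintegral_finset_sum _ (fun e _ => Measurable.of_discrete)]
      congr 1
      ext e
      rw [lintegral_indicator_one MeasurableSet.of_discrete]
    rw [h1]
    exact h2.trans (le_of_eq h3)
  -- each closed-edge probability is at most 1 - p
  have hedge' : ∀ e : G.edgeSet, μ {ω | ω e = false} ≤ ENNReal.ofReal (1 - p) := by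
    intro e
    have hcompl : {ω : Config G | ω e = false} = {ω : Config G | ω e = true}ᶜ := by
      ext ω; simp [Bool.not_eq_true]
    rw [hcompl, measure_compl MeasurableSet.of_discrete (measure_ne_top _ _), measure_univ]
    have : ENNReal.ofReal (1 - p) = 1 - ENNReal.ofReal p := by
      rw [ENNReal.ofReal_sub _ hp.1, ENNReal.ofReal_one]
    rw [this]
    exact tsub_le_tsub_left (hedge e) _
  -- edge count bound
  have hcard : (Fintype.card G.edgeSet : ℕ) ≤ m + 3 := by
    have hex : ∀ e : G.edgeSet, ∃ a : Fin (m + 3), (e : Sym2 (Fin (m+3))) = s(a, a + 1) := by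
      rintro ⟨e, he⟩
      induction e using Sym2.ind with
      | _ x y =>
        rw [SimpleGraph.mem_edgeSet] at he
        rcases (SimpleGraph.cycleGraph_adj (n := m + 1)).mp he with h | h
        · refine ⟨y, ?_⟩
          have hx : x = y + 1 := by rw [sub_eq_iff_eq_add.mp h]; abel
          show s(x, y) = s(y, y + 1)
          subst hx
          exact Sym2.eq_swap
        · refine ⟨x, ?_⟩
          have hy : y = x + 1 := by rw [sub_eq_iff_eq_add.mp h]; abel
          show s(x, y) = s(x, x + 1)
          subst hy
          rfl
    choose f hf using hex
    have hinj : Function.Injective f := by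
      intro e e' h
      exact Subtype.ext (by rw [hf e, hf e', h])
    simpa using Fintype.card_le_of_injective f hinj
  -- combine sums
  have hsum : ∑ e : G.edgeSet, μ {ω | ω e = false}
      ≤ (m + 3 : ENNReal) * ENNReal.ofReal (1 - p) := by
    calc ∑ e : G.edgeSet, μ {ω | ω e = false}
        ≤ ∑ _e : G.edgeSet, ENNReal.ofReal (1 - p) :=
          Finset.sum_le_sum (fun e _ => hedge' e)
      _ = (Fintype.card G.edgeSet : ENNReal) * ENNReal.ofReal (1 - p) := by
          rw [Finset.sum_const, Finset.card_univ, nsmul_eq_mul]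
      _ ≤ (m + 3 : ENNReal) * ENNReal.ofReal (1 - p) := by
          apply mul_le_mul_left
          exact_mod_cast Nat.cast_le.mpr hcard
  have hBadBound : (2 : ENNReal) * μ Bad ≤ (m + 3 : ENNReal) * ENNReal.ofReal (1 - p) :=
    le_trans hcount hsum
  -- pass to real numbers
  have hb : 2 * (μ Bad).toReal ≤ (m + 3 : ℝ) * (1 - p) := by
    have := ENNReal.toReal_mono (by finiteness) hBadBound
    rw [ENNReal.toReal_mul, ENNReal.toReal_mul, ENNReal.toReal_ofReal (by linarith [hp.2])] at this
    simpa [ENNReal.toReal_add, ENNReal.toReal_natCast] using this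
  have hcm : MeasurableSet Conn := MeasurableSet.of_discrete
  have hsplit : (μ Conn).toReal + (μ Connᶜ).toReal = 1 := by
    rw [← ENNReal.toReal_add (measure_ne_top _ _) (measure_ne_top _ _),
      measure_add_measure_compl hcm, measure_univ, ENNReal.toReal_one]
  have hcb : (μ Connᶜ).toReal ≤ (μ Bad).toReal :=
    ENNReal.toReal_mono (measure_ne_top _ _) (measure_mono hsub)
  have goalcast : ((m + 3 : ℕ) : ℝ) = (m : ℝ) + 3 := by push_cast; ring
  rw [hConn] at hsplit
  push_cast
  linarith


end OneIndep
end
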